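/- Let (Ω, F, P) and Q be probability measures such that P restricted to F_n is absolutely continuous with respect to Q restricted to F_n for every n, with likelihood ratio L_n = dP|_{F_n}/dQ|_{F_n}. For any stopping time T with respect to the filtration (F_n) and any event F ∈ F_T, P(F ∩ {T < ∞}) = E_Q[L_T 1_{F ∩ {T < ∞}}]. -/

import Mathlib

open MeasureTheory ProbabilityTheory

/-- Wald's likelihood ratio identity: if `P ≪ Q` on each `ℱ n` with likelihood
ratio `L n`, then for any stopping time `T` and any `F ∈ ℱ_T`,
`P(F ∩ {T < ∞}) = E_Q[L_T 1_{F ∩ {T < ∞}}]`. -/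
theorem stmt4 {Ω : Type*} {mΩ : MeasurableSpace Ω} (P Q : Measure Ω)
    [IsProbabilityMeasure P] [IsProbabilityMeasure Q]
    (ℱ : Filtration ℕ mΩ) (L : ℕ → Ω → ℝ)
    (hL_nonneg : ∀ n ω, 0 ≤ L n ω)
    (hL_meas : ∀ n, Measurable[ℱ n] (L n))
    -- `L n` is the density of `P` w.r.t. `Q` on `ℱ n`
    (hLR : ∀ n, ∀ A : Set Ω, MeasurableSet[ℱ n] A →
      P A = ∫⁻ ω in A, ENNReal.ofReal (L n ω) ∂Q)
    -- `T` is a stopping time (with value `⊤` meaning "never stops")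
    (T : Ω → ℕ∞)
    (hT : ∀ n : ℕ, MeasurableSet[ℱ n] {ω | T ω = (n : ℕ∞)})
    -- `F` belongs to the stopped σ-algebra `ℱ_T`
    (F : Set Ω)
    (hF : ∀ n : ℕ, MeasurableSet[ℱ n] (F ∩ {ω | T ω = (n : ℕ∞)})) :
    P (F ∩ {ω | T ω < ⊤}) =
      ∫⁻ ω in F ∩ {ω | T ω < ⊤}, ENNReal.ofReal (L (T ω).toNat ω) ∂Q := by
  set A : ℕ → Set Ω := fun n => F ∩ {ω | T ω = (n : ℕ∞)} with hA
  have hAmeas : ∀ n, MeasurableSet (A n) := fun n => ℱ.le n _ (hF n)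
  have hunion : F ∩ {ω | T ω < ⊤} = ⋃ n, A n := by
    ext ω
    simp only [Set.mem_inter_iff, Set.mem_setOf_eq, Set.mem_iUnion, hA]
    constructor
    · rintro ⟨hωF, hlt⟩
      lift T ω to ℕ using hlt.ne with n hn
      exact ⟨n, hωF, rfl⟩
    · rintro ⟨n, hωF, hn⟩
      exact ⟨hωF, hn ▸ WithTop.coe_lt_top n⟩
  have hdisj : Pairwise (Function.onFun Disjoint A) := by
    intro m n hmn
    simp only [Function.onFun, Set.disjoint_left, hA]
    rintro ω ⟨-, hm⟩ ⟨-, hn⟩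
    exact hmn (Nat.cast_injective (hm.symm.trans hn))
  rw [hunion, measure_iUnion hdisj hAmeas,
    lintegral_iUnion hAmeas hdisj]
  congr 1
  ext n
  rw [hLR n _ (hF n)]
  refine setLIntegral_congr_fun (hAmeas n) ?_
  rintro ω ⟨-, hn⟩
  simp only [Set.mem_setOf_eq] at hn
  simp only [hn]
  rfl
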